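/- For every s ∈ ℂ with sinh s ≠ 0, one has the matrix identity (1/sinh s)·[[cosh s, −1], [−1, cosh s]] = Z · [[tanh(s/2), 0], [0, coth(s/2)]] · Zᵀ, where Z is the 2×2 complex matrix (1/√2)·[[1, −1], [1, 1]]. (Note sinh s ≠ 0 guarantees sinh(s/2) ≠ 0 and cosh(s/2) ≠ 0, so tanh(s/2) and coth(s/2) are defined and nonzero.) -/

import Mathlib

open Matrix

/-- Diagonalization of the continuum two-sided DtN matrix:
`(1/sinh s)·[[cosh s, -1], [-1, cosh s]] = Z·diag(tanh(s/2), coth(s/2))·Zᵀ`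
with `Z = (1/√2)·[[1, -1], [1, 1]]`. -/
theorem continuum_DtN_diagonalization (s : ℂ) (hs : Complex.sinh s ≠ 0) :
    (1 / Complex.sinh s) • !![Complex.cosh s, -1; -1, Complex.cosh s]
      = ((1 / (Real.sqrt 2 : ℂ)) • !![1, -1; 1, 1]) *
        !![Complex.tanh (s / 2), 0; 0, Complex.cosh (s / 2) / Complex.sinh (s / 2)] *
        ((1 / (Real.sqrt 2 : ℂ)) • !![1, -1; 1, 1])ᵀ := by
  have hs2 : s = 2 * (s / 2) := by ring
  have hsinh : Complex.sinh s = 2 * Complex.sinh (s/2) * Complex.cosh (s/2) := by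
    have := Complex.sinh_two_mul (s/2)
    rwa [show 2*(s/2) = s by ring] at this
  have hone : Complex.cosh (s/2)^2 - Complex.sinh (s/2)^2 = 1 :=
    Complex.cosh_sq_sub_sinh_sq (s/2)
  have hcosh : Complex.cosh s = Complex.cosh (s/2)^2 + Complex.sinh (s/2)^2 := by
    have := Complex.cosh_two_mul (s/2)
    rw [show 2*(s/2) = s by ring] at this
    linear_combination this
  have h1 : Complex.sinh (s/2) ≠ 0 := by
    intro h; apply hs; rw [hsinh, h]; ring
  have h2 : Complex.cosh (s/2) ≠ 0 := by
    intro h; apply hs; rw [hsinh, h]; ring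
  have hsq : ((Real.sqrt 2 : ℂ))^2 = 2 := by
    rw [← Complex.ofReal_pow, Real.sq_sqrt (by norm_num)]; norm_num
  have hsq0 : (Real.sqrt 2 : ℂ) ≠ 0 := by
    intro h; rw [h] at hsq; norm_num at hsq
  have hsq4 : ((Real.sqrt 2 : ℂ))^4 = 4 := by
    rw [show ((Real.sqrt 2 : ℂ))^4 = (((Real.sqrt 2 : ℂ))^2)^2 by ring, hsq]; norm_num
  have hT : (!![1,-1;1,1] : Matrix (Fin 2) (Fin 2) ℂ)ᵀ = !![1,1;-1,1] := by
    ext i j; fin_cases i <;> fin_cases j <;> rfl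
  rw [Complex.tanh_eq_sinh_div_cosh, Matrix.transpose_smul, hT]
  ext i j
  fin_cases i <;> fin_cases j <;>
    simp [Matrix.mul_apply, Fin.sum_univ_two, Matrix.transpose_apply, hsinh, hcosh] <;>
    field_simp <;> ring_nf
  all_goals try simp only [hsq, hsq4]
  all_goals try ring
  all_goals linear_combination 2 * Complex.cosh_sq_sub_sinh_sq (s*(1/2))
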